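/- For the substitution system with rules B → BO, O → BYO, Y → BYG, G → BYG starting from G, the total letter count t n at level n satisfies the recurrence t (n+2) = 3 * t (n+1) - t n, with t 0 = 1 and t 1 = 3. -/

import Mathlib

inductive Letter | B | O | Y | G
deriving DecidableEq

def sub : Letter → List Letter
  | .B => [.B, .O]
  | .O => [.B, .Y, .O]
  | .Y => [.B, .Y, .G]
  | .G => [.B, .Y, .G]

/-- Level `n` of the substitution system, starting from the single letter `G`. -/
def level : ℕ → List Letter
  | 0 => [.G]
  | n + 1 => (level n).flatMap sub

/-- Fibonacci sequence with `f 0 = f 1 = 1`. -/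
def f : ℕ → ℕ
  | 0 => 1
  | 1 => 1
  | n + 2 => f (n + 1) + f n

lemma len_bind (l : List Letter) :
    (l.flatMap sub).length + l.count .B = 3 * l.length := by
  induction l with
  | nil => simp
  | cons a t ih =>
    cases a <;> simp [sub, List.count_cons] at ih ⊢ <;> omega

lemma countB_bind (l : List Letter) :
    (l.flatMap sub).count .B = l.length := by
  induction l with
  | nil => simp
  | cons a t ih =>
    cases a <;> simp [sub, List.count_cons] at ih ⊢ <;> omega

theorem levels_count_recurrence :
    (level 0).length = 1 ∧ (level 1).length = 3 ∧
    ∀ n : ℕ, (level (n + 2)).length = 3 * (level (n + 1)).length - (level n).length := by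
  refine ⟨rfl, rfl, fun n => ?_⟩
  have h1 := len_bind (level (n + 1))
  have h2 := countB_bind (level n)
  have e : level (n + 2) = (level (n + 1)).flatMap sub := rfl
  have e2 : level (n + 1) = (level n).flatMap sub := rfl
  rw [e2] at h1
  simp only [e, e2]
  omega
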